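/- The number of 2-Dyck paths of length 3n, viewed as the sequence C with C(0) = 1 and the Fuss-Catalan recurrence, satisfies C(n) = ∑_{i+j+k=n-1} C(i)·C(j)·C(k) for n ≥ 1. -/

import Mathlib

/-- A 2-Dyck path: a sequence over `{+1, -2}` all of whose partial sums are
nonnegative and whose total sum is `0`. -/
def IsDyck2Path (w : List ℤ) : Prop :=
  (∀ a ∈ w, a = 1 ∨ a = -2) ∧ (∀ j, 0 ≤ (w.take j).sum) ∧ w.sum = 0

/-- `numDyck2 n` is the number of 2-Dyck paths of length `3n`. -/
noncomputable def numDyck2 (n : ℕ) : ℕ :=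
  Set.ncard {w : List ℤ | IsDyck2Path w ∧ w.length = 3 * n}

namespace Dyck2Aux

/-- The gluing map. -/
def g3 (x : List ℤ × List ℤ × List ℤ) : List ℤ :=
  1 :: (x.1 ++ 1 :: (x.2.1 ++ -2 :: x.2.2))

lemma sum_take_append (a b : List ℤ) (t : ℕ) :
    ((a ++ b).take t).sum = (a.take t).sum + (b.take (t - a.length)).sum := by
  rw [List.take_append, List.sum_append]

lemma sum_take_cons (x : ℤ) (l : List ℤ) (t : ℕ) (ht : 0 < t) :
    (((x :: l)).take t).sum = x + (l.take (t - 1)).sum := by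
  obtain ⟨t, rfl⟩ := Nat.exists_eq_succ_of_ne_zero ht.ne'
  simp

lemma sum_take_drop (w : List ℤ) (i t : ℕ) :
    (w.take (i + t)).sum = (w.take i).sum + ((w.drop i).take t).sum := by
  rw [List.take_add, List.sum_append]

section formulas

variable (a b c : List ℤ)

/-- prefix sums of g3 in zone 1. -/
lemma G2 (r : List ℤ) (t : ℕ) (h1 : 1 ≤ t) (h2 : t ≤ 1 + a.length) :
    (((1 : ℤ) :: (a ++ r)).take t).sum = 1 + (a.take (t - 1)).sum := by
  rw [sum_take_cons _ _ _ h1, sum_take_append]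
  have : t - 1 - a.length = 0 := by omega
  simp [this]

/-- prefix sums of g3 in zone 2. -/
lemma G3 (r : List ℤ) (ha : a.sum = 0) (t : ℕ)
    (h1 : 2 + a.length ≤ t) (h2 : t ≤ 2 + a.length + b.length) :
    (((1 : ℤ) :: (a ++ 1 :: (b ++ r))).take t).sum = 2 + (b.take (t - 2 - a.length)).sum := by
  rw [sum_take_cons _ _ _ (by omega), sum_take_append]
  rw [List.take_of_length_le (by omega), ha]
  rw [sum_take_cons _ _ _ (by omega), sum_take_append]
  have h3 : t - 1 - a.length - 1 - b.length = 0 := by omega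
  have h4 : t - 1 - a.length - 1 = t - 2 - a.length := by omega
  rw [h3, h4]
  simp
  ring

/-- prefix sums of g3 in zone 3. -/
lemma G4 (ha : a.sum = 0) (hb : b.sum = 0) (t : ℕ)
    (h1 : 3 + a.length + b.length ≤ t) :
    (((1 : ℤ) :: (a ++ 1 :: (b ++ -2 :: c))).take t).sum
      = (c.take (t - 3 - a.length - b.length)).sum := by
  rw [sum_take_cons _ _ _ (by omega), sum_take_append]
  rw [List.take_of_length_le (by omega), ha]
  rw [sum_take_cons _ _ _ (by omega), sum_take_append]
  rw [List.take_of_length_le (by omega), hb]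
  rw [sum_take_cons _ _ _ (by omega)]
  have : t - 1 - a.length - 1 - b.length - 1 = t - 3 - a.length - b.length := by omega
  rw [this]
  ring

end formulas

lemma g3_length (a b c : List ℤ) :
    (g3 (a, b, c)).length = 3 + a.length + b.length + c.length := by
  simp [g3]; omega

/-- The glued path is again a 2-Dyck path. -/
lemma g3_dyck {a b c : List ℤ} (ha : IsDyck2Path a) (hb : IsDyck2Path b)
    (hc : IsDyck2Path c) : IsDyck2Path (g3 (a, b, c)) := by
  obtain ⟨ha1, ha2, ha3⟩ := ha
  obtain ⟨hb1, hb2, hb3⟩ := hb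
  obtain ⟨hc1, hc2, hc3⟩ := hc
  refine ⟨?_, ?_, ?_⟩
  · intro x hx
    simp only [g3, List.mem_cons, List.mem_append] at hx
    rcases hx with rfl | h | rfl | h | rfl | h
    · exact Or.inl rfl
    · exact ha1 x h
    · exact Or.inl rfl
    · exact hb1 x h
    · exact Or.inr rfl
    · exact hc1 x h
  · intro t
    rcases Nat.eq_zero_or_pos t with rfl | ht
    · simp
    rcases le_or_gt t (1 + a.length) with h | h
    · rw [show (g3 (a,b,c)) = (1 : ℤ) :: (a ++ 1 :: (b ++ -2 :: c)) from rfl, G2 _ _ _ ht h]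
      have := ha2 (t - 1)
      linarith
    rcases le_or_gt t (2 + a.length + b.length) with h2 | h2
    · rw [show (g3 (a,b,c)) = (1 : ℤ) :: (a ++ 1 :: (b ++ -2 :: c)) from rfl,
        G3 _ _ _ ha3 t (by omega) h2]
      have := hb2 (t - 2 - a.length)
      linarith
    · rw [show (g3 (a,b,c)) = (1 : ℤ) :: (a ++ 1 :: (b ++ -2 :: c)) from rfl,
        G4 _ _ _ ha3 hb3 t (by omega)]
      exact hc2 _
  · simp [g3, ha3, hb3, hc3]

/-- zone facts needed for uniqueness, for a glued word. -/
lemma F_facts {a b c : List ℤ} (ha : IsDyck2Path a) (hb : IsDyck2Path b)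
    (_hc : IsDyck2Path c) :
    (∀ t, 0 < t → t < 3 + a.length + b.length → 1 ≤ ((g3 (a,b,c)).take t).sum) ∧
    (((g3 (a,b,c)).take (3 + a.length + b.length)).sum = 0) ∧
    (((g3 (a,b,c)).take (1 + a.length)).sum = 1) ∧
    (∀ t, 1 + a.length < t → t < 3 + a.length + b.length →
      2 ≤ ((g3 (a,b,c)).take t).sum) := by
  obtain ⟨ha1, ha2, ha3⟩ := ha
  obtain ⟨hb1, hb2, hb3⟩ := hb
  have e : (g3 (a,b,c)) = (1 : ℤ) :: (a ++ 1 :: (b ++ -2 :: c)) := rfl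
  have hF4 : ∀ t, 1 + a.length < t → t < 3 + a.length + b.length →
      2 ≤ ((g3 (a,b,c)).take t).sum := by
    intro t h1 h2
    rw [e, G3 _ _ _ ha3 t (by omega) (by omega)]
    have := hb2 (t - 2 - a.length)
    linarith
  refine ⟨?_, ?_, ?_, hF4⟩
  · intro t h1 h2
    rcases le_or_gt t (1 + a.length) with h | h
    · rw [e, G2 _ _ _ h1 h]
      have := ha2 (t - 1)
      linarith
    · have := hF4 t h h2
      linarith
  · rw [e, G4 _ _ _ ha3 hb3 _ (le_refl _)]
    have : 3 + a.length + b.length - 3 - a.length - b.length = 0 := by omega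
    rw [this]
    simp
  · rw [e, G2 _ _ _ (by omega) (le_refl _)]
    rw [List.take_of_length_le (by omega), ha3]
    ring

/-- Uniqueness of the decomposition. -/
lemma g3_inj {a b c a' b' c' : List ℤ}
    (ha : IsDyck2Path a) (hb : IsDyck2Path b) (hc : IsDyck2Path c)
    (ha' : IsDyck2Path a') (hb' : IsDyck2Path b') (hc' : IsDyck2Path c')
    (h : g3 (a, b, c) = g3 (a', b', c')) : a = a' ∧ b = b' ∧ c = c' := by
  obtain ⟨F1, F2, F3, F4⟩ := F_facts ha hb hc
  obtain ⟨F1', F2', F3', F4'⟩ := F_facts ha' hb' hc'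
  rw [← h] at F1' F2' F3' F4'
  have hT : a.length + b.length = a'.length + b'.length := by
    by_contra hd
    rcases Nat.lt_or_ge (a.length + b.length) (a'.length + b'.length) with hlt | hge
    · have := F1' (3 + a.length + b.length) (by omega) (by omega)
      rw [F2] at this; omega
    · have := F1 (3 + a'.length + b'.length) (by omega) (by omega)
      rw [F2'] at this; omega
  have hA : a.length = a'.length := by
    by_contra hd
    rcases Nat.lt_or_ge a.length a'.length with hlt | hge
    · have := F4 (1 + a'.length) (by omega) (by omega)
      rw [F3'] at this; omega
    · have := F4' (1 + a.length) (by omega) (by omega)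
      rw [F3] at this; omega
  have hB : b.length = b'.length := by omega
  simp only [g3, List.cons.injEq, true_and] at h
  obtain ⟨h1, h2⟩ := List.append_inj h hA
  have h2' : b ++ -2 :: c = b' ++ -2 :: c' := by
    simpa using h2
  obtain ⟨h3, h4⟩ := List.append_inj h2' hB
  refine ⟨h1, h3, ?_⟩
  simpa using h4

/-- Every 2-Dyck path has length divisible by 3. -/
lemma dyck_length_dvd {w : List ℤ} (hw : IsDyck2Path w) : 3 ∣ w.length := by
  obtain ⟨h1, _, h3⟩ := hw
  have key : ∀ w : List ℤ, (∀ a ∈ w, a = 1 ∨ a = -2) →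
      (3 : ℤ) * (w.countP (· = -2) : ℤ) = (w.length : ℤ) - w.sum := by
    intro w
    induction w with
    | nil => simp
    | cons x l ih =>
      intro h
      have hx := h x List.mem_cons_self
      have hl := ih (fun a ha => h a (List.mem_cons_of_mem x ha))
      rcases hx with rfl | rfl <;>
        · simp only [List.countP_cons, List.length_cons, List.sum_cons] at *
          norm_num
          linarith
  have hk := key w h1
  rw [h3] at hk
  have : (w.length : ℤ) = 3 * (w.countP (· = -2) : ℤ) := by linarith
  exact ⟨w.countP (· = -2), by exact_mod_cast this⟩

/-- Existence of the decomposition. -/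
lemma exists_decomp {w : List ℤ} (hw : IsDyck2Path w) (hne : w ≠ []) :
    ∃ a b c, IsDyck2Path a ∧ IsDyck2Path b ∧ IsDyck2Path c ∧ w = g3 (a, b, c) := by
  obtain ⟨hent, hpos, hsum⟩ := hw
  have hL : 0 < w.length := List.length_pos_iff.mpr hne
  have hPL : 0 < w.length ∧ (w.take w.length).sum = 0 := by
    rw [List.take_length]; exact ⟨hL, hsum⟩
  have hex : ∃ t, 0 < t ∧ (w.take t).sum = 0 := ⟨w.length, hPL⟩
  set T := Nat.find hex with hTdef
  have hTspec : 0 < T ∧ (w.take T).sum = 0 := Nat.find_spec hex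
  have hTle : T ≤ w.length := Nat.find_le hPL
  have hTmin : ∀ t, 0 < t → t < T → (w.take t).sum ≠ 0 := by
    intro t h1 h2 h3
    exact Nat.find_min hex h2 ⟨h1, h3⟩
  have pos : ∀ t, 0 < t → t < T → 1 ≤ (w.take t).sum := by
    intro t h1 h2
    have := hpos t
    have := hTmin t h1 h2
    omega
  clear_value T
  have step : ∀ (i : ℕ), i < w.length → (w.take (i+1)).sum = (w.take i).sum + w.getD i 0 := by
    intro i h
    rw [List.getD_eq_getElem w 0 h]
    exact List.sum_take_succ w i h
  have ent : ∀ (i : ℕ), i < w.length → w.getD i 0 = 1 ∨ w.getD i 0 = -2 := by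
    intro i h
    rw [List.getD_eq_getElem w 0 h]
    exact hent _ (List.getElem_mem h)
  have hw0 : w.getD 0 0 = 1 := by
    rcases ent 0 hL with h | h
    · exact h
    · exfalso
      have h1 := step 0 hL
      simp only [List.take_zero, List.sum_nil, zero_add] at h1
      have h2 := hpos 1
      rw [h1, h] at h2
      omega
  have hs1 : (w.take 1).sum = 1 := by
    have h1 := step 0 hL
    simp only [List.take_zero, List.sum_nil, zero_add] at h1
    rw [h1, hw0]
  have hT2 : 2 ≤ T := by
    by_contra h
    have hT1 : T = 1 := by omega
    have h2 := hTspec.2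
    rw [hT1] at h2
    rw [hs1] at h2
    omega
  -- S : last time at level 1 before T
  set S := Nat.findGreatest (fun s => (w.take s).sum = 1) (T - 1) with hSdef
  have hS1 : 1 ≤ S := Nat.le_findGreatest (by omega) hs1
  have hQS : (w.take S).sum = 1 := by
    have := Nat.findGreatest_spec (P := fun s => (w.take s).sum = 1) (m := 1) (n := T - 1)
      (by omega) hs1
    simpa using this
  have hSle : S ≤ T - 1 := Nat.findGreatest_le (T - 1)
  have hmax : ∀ t, S < t → t ≤ T - 1 → (w.take t).sum ≠ 1 := by
    intro t h1 h2
    exact Nat.findGreatest_is_greatest h1 h2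
  clear_value S
  have C : ∀ t, S < t → t ≤ T - 1 → 2 ≤ (w.take t).sum := by
    intro t
    induction t with
    | zero => omega
    | succ t ih =>
      intro h1 h2
      have htlen : t < w.length := by omega
      have hstep := step t htlen
      have hp : 1 ≤ (w.take (t+1)).sum := pos (t+1) (by omega) (by omega)
      have hne1 : (w.take (t+1)).sum ≠ 1 := hmax (t+1) h1 h2
      rcases Nat.lt_or_ge S t with hst | hst
      · have := ih hst (by omega)
        rcases ent t htlen with h | h <;> omega
      · have hts : t = S := by omega
        have hq : (w.take t).sum = 1 := by rw [hts]; exact hQS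
        rcases ent t htlen with h | h <;> omega
  have hSlt : S ≤ T - 2 := by
    by_contra h
    have hS : S = T - 1 := by omega
    have hlen : T - 1 < w.length := by omega
    have hstep := step (T-1) hlen
    have hTT : T - 1 + 1 = T := by omega
    have hq : (w.take (T-1)).sum = 1 := by rw [← hS]; exact hQS
    rw [hTT, hTspec.2, hq] at hstep
    rcases ent (T-1) hlen with h | h <;> omega
  have hTm1 : 2 ≤ (w.take (T-1)).sum := C (T-1) (by omega) le_rfl
  have hlenT : T - 1 < w.length := by omega
  have hstepT := step (T-1) hlenT
  have hTT : T - 1 + 1 = T := by omega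
  rw [hTT, hTspec.2] at hstepT
  have hwT : w.getD (T-1) 0 = -2 := by
    rcases ent (T-1) hlenT with h | h
    · omega
    · exact h
  have hsTm1 : (w.take (T-1)).sum = 2 := by omega
  have hlenS : S < w.length := by omega
  have hstepS := step S hlenS
  rw [hQS] at hstepS
  have hCS1 : 2 ≤ (w.take (S+1)).sum := C (S+1) (by omega) (by omega)
  have hwS : w.getD S 0 = 1 := by
    rcases ent S hlenS with h | h
    · exact h
    · omega
  have hsS1 : (w.take (S+1)).sum = 2 := by omega
  -- the three pieces
  set a := (w.drop 1).take (S - 1) with hadef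
  set b := (w.drop (S+1)).take (T - S - 2) with hbdef
  set c := w.drop T with hcdef
  have hla : a.length = S - 1 := by
    rw [hadef, List.length_take, List.length_drop]; omega
  have hlb : b.length = T - S - 2 := by
    rw [hbdef, List.length_take, List.length_drop]; omega
  -- Dyck property for a
  have sum_a : ∀ t, t ≤ S - 1 → ((w.drop 1).take t).sum = (w.take (1 + t)).sum - 1 := by
    intro t _
    have := sum_take_drop w 1 t
    rw [hs1] at this
    omega
  have ha : IsDyck2Path a := by
    refine ⟨fun x hx => hent x (List.drop_subset 1 w (List.take_subset _ _ hx)), ?_, ?_⟩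
    · intro j
      rw [hadef, List.take_take]
      rcases Nat.eq_zero_or_pos (min j (S-1)) with h0 | h0
      · rw [h0]; simp
      · rw [sum_a _ (by omega)]
        have := pos (1 + min j (S-1)) (by omega) (by omega)
        omega
    · have : a.sum = (a.take (S-1)).sum := by
        rw [hadef, List.take_take, min_self]
      rw [this, hadef, List.take_take, min_self, sum_a _ le_rfl]
      have h1S : 1 + (S - 1) = S := by omega
      rw [h1S, hQS]
      ring
  -- Dyck property for b
  have sum_b : ∀ t, t ≤ T - S - 2 → ((w.drop (S+1)).take t).sum = (w.take (S+1+t)).sum - 2 := by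
    intro t _
    have := sum_take_drop w (S+1) t
    rw [hsS1] at this
    omega
  have hb : IsDyck2Path b := by
    refine ⟨fun x hx => hent x (List.drop_subset (S+1) w (List.take_subset _ _ hx)), ?_, ?_⟩
    · intro j
      rw [hbdef, List.take_take]
      rcases Nat.eq_zero_or_pos (min j (T-S-2)) with h0 | h0
      · rw [h0]; simp
      · rw [sum_b _ (by omega)]
        have := C (S + 1 + min j (T-S-2)) (by omega) (by omega)
        omega
    · have : b.sum = (b.take (T-S-2)).sum := by
        rw [hbdef, List.take_take, min_self]
      rw [this, hbdef, List.take_take, min_self, sum_b _ le_rfl]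
      have hST : S + 1 + (T - S - 2) = T - 1 := by omega
      rw [hST, hsTm1]
      ring
  -- Dyck property for c
  have sum_c : ∀ t, ((w.drop T).take t).sum = (w.take (T+t)).sum := by
    intro t
    have := sum_take_drop w T t
    rw [hTspec.2] at this
    omega
  have hc : IsDyck2Path c := by
    refine ⟨fun x hx => hent x (List.drop_subset T w hx), ?_, ?_⟩
    · intro j
      rw [hcdef, sum_c]
      exact hpos _
    · have : c.sum = (c.take c.length).sum := by rw [List.take_length]
      rw [this, hcdef, sum_c]
      have : T + (w.drop T).length = w.length := by
        rw [List.length_drop]; omega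
      rw [this, List.take_length, hsum]
  -- reconstruction
  have dec : ∀ (i : ℕ), i < w.length → w.drop i = w.getD i 0 :: w.drop (i+1) := by
    intro i h
    rw [List.getD_eq_getElem w 0 h]
    exact List.drop_eq_getElem_cons h
  have e0 : w = 1 :: w.drop 1 := by
    have h := dec 0 hL
    rw [hw0] at h
    simpa using h
  have e1 : w.drop 1 = a ++ w.drop S := by
    have h1 : (w.drop 1).take (S-1) ++ (w.drop 1).drop (S-1) = w.drop 1 :=
      List.take_append_drop _ _
    have h2 : (w.drop 1).drop (S-1) = w.drop S := by
      rw [List.drop_drop]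
      congr 1
      omega
    rw [h2] at h1
    exact h1.symm
  have e2 : w.drop S = 1 :: w.drop (S+1) := by
    have h := dec S hlenS
    rw [hwS] at h
    exact h
  have e3 : w.drop (S+1) = b ++ w.drop (T-1) := by
    have h1 : (w.drop (S+1)).take (T-S-2) ++ (w.drop (S+1)).drop (T-S-2) = w.drop (S+1) :=
      List.take_append_drop _ _
    have h2 : (w.drop (S+1)).drop (T-S-2) = w.drop (T-1) := by
      rw [List.drop_drop]
      congr 1
      omega
    rw [h2] at h1
    exact h1.symm
  have e4 : w.drop (T-1) = -2 :: w.drop T := by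
    have h := dec (T-1) hlenT
    rw [hwT, hTT] at h
    exact h
  refine ⟨a, b, c, ha, hb, hc, ?_⟩
  rw [show g3 (a, b, c) = 1 :: (a ++ 1 :: (b ++ -2 :: c)) from rfl]
  conv_lhs => rw [e0, e1, e2, e3, e4]

/-- Finiteness. -/
lemma dset_finite (L : ℕ) : {w : List ℤ | IsDyck2Path w ∧ w.length = L}.Finite := by
  have aux : ∀ w : List ℤ, (∀ a ∈ w, a = 1 ∨ a = -2) →
      (w.map (fun x => decide (x = 1))).map (fun b => if b then (1 : ℤ) else -2) = w := by
    intro w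
    induction w with
    | nil => intro; rfl
    | cons x l ih =>
      intro h
      have hx := h x List.mem_cons_self
      have hl := ih (fun a ha => h a (List.mem_cons_of_mem x ha))
      rcases hx with rfl | rfl <;> simp [hl]
  apply Set.Finite.subset ((List.finite_length_eq Bool L).image
    (fun l : List Bool => l.map (fun b => if b then (1 : ℤ) else -2)))
  rintro w ⟨⟨h1, _, _⟩, hlen⟩
  exact ⟨w.map (fun x => decide (x = 1)), by simpa using hlen, aux w h1⟩

/-- The finset of 2-Dyck paths of length `3n`. -/
noncomputable def Fs (n : ℕ) : Finset (List ℤ) := (dset_finite (3 * n)).toFinset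

lemma mem_Fs {w : List ℤ} {n : ℕ} : w ∈ Fs n ↔ IsDyck2Path w ∧ w.length = 3 * n := by
  simp [Fs, Set.Finite.mem_toFinset]

lemma numDyck2_eq (n : ℕ) : numDyck2 n = (Fs n).card :=
  Set.ncard_eq_toFinset_card _ (dset_finite (3 * n))

lemma dyck_nil : IsDyck2Path [] := by
  refine ⟨by simp, fun j => by simp, by simp⟩

end Dyck2Aux

open Dyck2Aux in
/-- The number of 2-Dyck paths of length `3n` satisfies the Fuss-Catalan
recurrence `C(n) = ∑_{i+j+k=n-1} C(i)·C(j)·C(k)` for `n ≥ 1`, with `C(0) = 1`. -/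
theorem numDyck2_recurrence :
    numDyck2 0 = 1 ∧
    ∀ n, 1 ≤ n →
      numDyck2 n = ∑ p ∈ Finset.HasAntidiagonal.antidiagonal (n - 1), ∑ q ∈ Finset.HasAntidiagonal.antidiagonal p.2,
        numDyck2 p.1 * numDyck2 q.1 * numDyck2 q.2 := by
  constructor
  · rw [numDyck2_eq]
    have : Fs 0 = {([] : List ℤ)} := by
      ext w
      simp only [mem_Fs, Finset.mem_singleton]
      constructor
      · rintro ⟨_, hlen⟩
        exact List.length_eq_zero_iff.mp (by omega)
      · rintro rfl
        exact ⟨dyck_nil, by simp⟩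
    rw [this, Finset.card_singleton]
  · intro n hn
    -- the big decomposition of the finset
    have memim : ∀ (w : List ℤ) (i j k : ℕ),
        w ∈ (Fs i ×ˢ Fs j ×ˢ Fs k).image g3 ↔
          ∃ a b c, (IsDyck2Path a ∧ a.length = 3*i) ∧ (IsDyck2Path b ∧ b.length = 3*j) ∧
            (IsDyck2Path c ∧ c.length = 3*k) ∧ g3 (a, b, c) = w := by
      intro w i j k
      simp only [Finset.mem_image, Finset.mem_product, mem_Fs, Prod.exists]
      constructor
      · rintro ⟨a, b, c, ⟨h1, h2, h3⟩, h4⟩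
        exact ⟨a, b, c, h1, h2, h3, h4⟩
      · rintro ⟨a, b, c, h1, h2, h3, h4⟩
        exact ⟨a, b, c, ⟨h1, h2, h3⟩, h4⟩
    have key : Fs n = (Finset.HasAntidiagonal.antidiagonal (n-1)).biUnion (fun p =>
        (Finset.HasAntidiagonal.antidiagonal p.2).biUnion (fun q =>
          ((Fs p.1 ×ˢ Fs q.1 ×ˢ Fs q.2).image g3))) := by
      ext w
      simp only [Finset.mem_biUnion, Finset.HasAntidiagonal.mem_antidiagonal, mem_Fs]
      constructor
      · rintro ⟨hw, hlen⟩
        have hne : w ≠ [] := by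
          intro h
          rw [h] at hlen
          simp at hlen
          omega
        obtain ⟨a, b, c, ha, hb, hc, rfl⟩ := exists_decomp hw hne
        obtain ⟨i, hi⟩ := dyck_length_dvd ha
        obtain ⟨j, hj⟩ := dyck_length_dvd hb
        obtain ⟨k, hk⟩ := dyck_length_dvd hc
        rw [g3_length] at hlen
        refine ⟨(i, j + k), by omega, (j, k), rfl, ?_⟩
        exact (memim _ i j k).mpr ⟨a, b, c, ⟨ha, hi⟩, ⟨hb, hj⟩, ⟨hc, hk⟩, rfl⟩
      · rintro ⟨p, hp, q, hq, hwim⟩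
        rw [memim] at hwim
        obtain ⟨a, b, c, ⟨ha, hla⟩, ⟨hb, hlb⟩, ⟨hc, hlc⟩, rfl⟩ := hwim
        exact ⟨g3_dyck ha hb hc, by rw [g3_length]; omega⟩
    rw [numDyck2_eq, key, Finset.card_biUnion ?outer]
    case outer =>
      rintro p hp p' hp' hne
      rw [Function.onFun, Finset.disjoint_left]
      rintro w hw hw'
      simp only [Finset.mem_biUnion] at hw hw'
      obtain ⟨q, hq, hwq⟩ := hw
      obtain ⟨q', hq', hwq'⟩ := hw'
      rw [memim] at hwq hwq'
      obtain ⟨a, b, c, ⟨ha, hla⟩, ⟨hb, hlb⟩, ⟨hc, hlc⟩, he⟩ := hwq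
      obtain ⟨a', b', c', ⟨ha', hla'⟩, ⟨hb', hlb'⟩, ⟨hc', hlc'⟩, he'⟩ := hwq'
      obtain ⟨r1, r2, r3⟩ := g3_inj ha hb hc ha' hb' hc' (he.trans he'.symm)
      subst r1; subst r2; subst r3
      apply hne
      have hp1 : p.1 = p'.1 := by omega
      simp only [Finset.mem_coe, Finset.HasAntidiagonal.mem_antidiagonal] at hp hp'
      ext
      · exact hp1
      · omega
    have inner : ∀ p ∈ Finset.HasAntidiagonal.antidiagonal (n-1),
        ((Finset.HasAntidiagonal.antidiagonal p.2).biUnion (fun q =>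
          ((Fs p.1 ×ˢ Fs q.1 ×ˢ Fs q.2).image g3))).card =
        ∑ q ∈ Finset.HasAntidiagonal.antidiagonal p.2, numDyck2 p.1 * numDyck2 q.1 * numDyck2 q.2 := by
      intro p _
      rw [Finset.card_biUnion ?inner]
      case inner =>
        rintro q hq q' hq' hne
        rw [Function.onFun, Finset.disjoint_left]
        rintro w hw hw'
        rw [memim] at hw hw'
        obtain ⟨a, b, c, ⟨ha, hla⟩, ⟨hb, hlb⟩, ⟨hc, hlc⟩, he⟩ := hw
        obtain ⟨a', b', c', ⟨ha', hla'⟩, ⟨hb', hlb'⟩, ⟨hc', hlc'⟩, he'⟩ := hw'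
        obtain ⟨r1, r2, r3⟩ := g3_inj ha hb hc ha' hb' hc' (he.trans he'.symm)
        subst r1; subst r2; subst r3
        apply hne
        ext
        · omega
        · omega
      apply Finset.sum_congr rfl
      intro q _
      rw [Finset.card_image_of_injOn, Finset.card_product, Finset.card_product,
        numDyck2_eq, numDyck2_eq, numDyck2_eq, mul_assoc]
      rintro ⟨a, b, c⟩ hm ⟨a', b', c'⟩ hm' heq
      simp only [Finset.mem_coe, Finset.mem_product, mem_Fs] at hm hm'
      obtain ⟨⟨ha, _⟩, ⟨hb, _⟩, ⟨hc, _⟩⟩ := hm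
      obtain ⟨⟨ha', _⟩, ⟨hb', _⟩, ⟨hc', _⟩⟩ := hm'
      obtain ⟨r1, r2, r3⟩ := g3_inj ha hb hc ha' hb' hc' heq
      simp [r1, r2, r3]
    exact Finset.sum_congr rfl inner
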